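/- In C[Gamma(n)], for a partition M with |M| ≤ n define Delta_n^{M} as the sum over all sequences of |M| pairwise distinct indices of the product of the corresponding disjoint cycles times the product of factors (1 - eps_i) over all |M| indices i involved. Then Delta_n^{M} lies in the center of C[Gamma(n)]. -/

import Mathlib

open scoped BigOperators

/-- A partial bijection of `α`: a partially defined injective map,
encoded as an `Option`-valued function that is injective on its domain. -/
def PartialBij (α : Type*) : Type _ :=
  {f : α → Option α // ∀ x y z : α, f x = some z → f y = some z → x = y}

namespace PartialBij

variable {α : Type*}

/-- Composition: `(g.comp f) x = g (f x)` (product of relations). -/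
def comp (g f : PartialBij α) : PartialBij α :=
  ⟨fun x => (f.1 x).bind g.1, by
    intro x y z hx hy
    rcases Option.bind_eq_some_iff.mp hx with ⟨a, ha, ha'⟩
    rcases Option.bind_eq_some_iff.mp hy with ⟨b, hb, hb'⟩
    have hab : a = b := g.2 _ _ _ ha' hb'
    subst hab
    exact f.2 _ _ _ ha hb⟩

instance : Monoid (PartialBij α) where
  mul := comp
  one := ⟨fun x => some x, fun x y z hx hy =>
    (Option.some_inj.mp hx).trans (Option.some_inj.mp hy).symm⟩
  mul_assoc a b c := Subtype.ext <| funext fun x => (Option.bind_assoc _ _ _).symm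
  one_mul a := Subtype.ext <| funext fun x => by
    show (a.1 x).bind some = a.1 x
    cases a.1 x <;> rfl
  mul_one a := Subtype.ext <| funext fun x => rfl

theorem mul_def (g f : PartialBij α) (x : α) : (g * f).1 x = (f.1 x).bind g.1 := rfl

theorem one_def (x : α) : (1 : PartialBij α).1 x = some x := rfl

/-- The domain of a partial bijection. -/
def dom (f : PartialBij α) : Set α := {x | f.1 x ≠ none}

/-- The range of a partial bijection. -/
def ran (f : PartialBij α) : Set α := {y | ∃ x, f.1 x = some y}

open Classical in
/-- The inverse partial bijection `γ*`. -/
noncomputable def inv (f : PartialBij α) : PartialBij α :=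
  ⟨fun y => if h : ∃ x, f.1 x = some y then some h.choose else none, by
    intro a b z ha hb
    dsimp only at ha hb
    by_cases h1 : ∃ x, f.1 x = some a
    · by_cases h2 : ∃ x, f.1 x = some b
      · rw [dif_pos h1] at ha
        rw [dif_pos h2] at hb
        have ha' := h1.choose_spec
        have hb' := h2.choose_spec
        rw [Option.some_inj.mp ha] at ha'
        rw [Option.some_inj.mp hb] at hb'
        exact Option.some_inj.mp (ha'.symm.trans hb')
      · rw [dif_neg h2] at hb
        exact absurd hb (by simp)
    · rw [dif_neg h1] at ha
      exact absurd ha (by simp)⟩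

open Classical in
/-- The identity bijection `1_Y` of a subset `Y ⊆ α`. -/
noncomputable def idOn (Y : Set α) : PartialBij α :=
  ⟨fun x => if x ∈ Y then some x else none, by
    intro x y z hx hy
    dsimp only at hx hy
    split_ifs at hx hy
    exact (Option.some_inj.mp hx).trans (Option.some_inj.mp hy).symm⟩

/-- A permutation regarded as a (total) partial bijection. -/
def ofPerm (s : Equiv.Perm α) : PartialBij α :=
  ⟨fun x => some (s x), fun x y z hx hy =>
    s.injective ((Option.some_inj.mp hx).trans (Option.some_inj.mp hy).symm)⟩

/-- The idempotent `ε_k`: the identity bijection of `α \ {k}`. -/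
def eps [DecidableEq α] (k : α) : PartialBij α :=
  ⟨fun x => if x = k then none else some x, by
    intro x y z hx hy
    dsimp only at hx hy
    split_ifs at hx hy
    exact (Option.some_inj.mp hx).trans (Option.some_inj.mp hy).symm⟩

/-- `deg γ`: the number of points which are not fixed points of `γ`. -/
def deg {n : ℕ} (f : PartialBij (Fin n)) : ℕ :=
  (Finset.univ.filter fun i : Fin n => f.1 i ≠ some i).card

/-- `deg_m γ`: the number of points in `{m+1,…,n}` (0-indexed: indices `≥ m`)
which are not fixed points of `γ`. -/
def degm {n : ℕ} (m : ℕ) (f : PartialBij (Fin n)) : ℕ :=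
  (Finset.univ.filter fun i : Fin n => m ≤ i.val ∧ f.1 i ≠ some i).card

/-- The rank of a partial bijection: the cardinality of its domain. -/
def rank {n : ℕ} (f : PartialBij (Fin n)) : ℕ :=
  (Finset.univ.filter fun i : Fin n => f.1 i ≠ none).card

end PartialBij

namespace PartialBij

/-- The upper-left `n × n` corner of a partial bijection of `{1,…,n+1}`. -/
def corner {n : ℕ} (γ : PartialBij (Fin (n + 1))) : PartialBij (Fin n) :=
  ⟨fun i => (γ.1 i.castSucc).bind fun j => if h : j.val < n then some ⟨j.val, h⟩ else none, by
    intro x y z hx hy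
    dsimp only at hx hy
    rcases Option.bind_eq_some_iff.mp hx with ⟨a, ha, ha'⟩
    rcases Option.bind_eq_some_iff.mp hy with ⟨b, hb, hb'⟩
    have haz : a = z.castSucc := by
      by_cases h : a.val < n
      · rw [dif_pos h] at ha'
        have := Option.some_inj.mp ha'
        apply Fin.ext
        rw [← this]
        simp
      · rw [dif_neg h] at ha'
        exact absurd ha' (by simp)
    have hbz : b = z.castSucc := by
      by_cases h : b.val < n
      · rw [dif_pos h] at hb'
        have := Option.some_inj.mp hb'
        apply Fin.ext
        rw [← this]
        simp
      · rw [dif_neg h] at hb'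
        exact absurd hb' (by simp)
    subst haz
    rw [hbz] at hb
    exact Fin.castSucc_injective n (γ.2 _ _ _ ha hb)⟩

/-- The `0`-embedding `ψ : Γ(n) → Γ(n+1)` (extension by zero). -/
def extend0 {n : ℕ} (γ : PartialBij (Fin n)) : PartialBij (Fin (n + 1)) :=
  ⟨fun i => if h : i.val < n then (γ.1 ⟨i.val, h⟩).map Fin.castSucc else none, by
    intro x y z hx hy
    dsimp only at hx hy
    by_cases h1 : x.val < n
    · by_cases h2 : y.val < n
      · rw [dif_pos h1] at hx
        rw [dif_pos h2] at hy
        rcases Option.map_eq_some_iff.mp hx with ⟨a, ha, ha'⟩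
        rcases Option.map_eq_some_iff.mp hy with ⟨b, hb, hb'⟩
        have hab : a = b := Fin.castSucc_injective n (ha'.trans hb'.symm)
        subst hab
        have := γ.2 _ _ _ ha hb
        exact Fin.ext (by simpa using congrArg Fin.val this)
      · rw [dif_neg h2] at hy
        exact absurd hy (by simp)
    · rw [dif_neg h1] at hx
      exact absurd hx (by simp)⟩

/-- `θ_{n+1} : C[Γ(n+1)] → C[Γ(n)]`, the linear map striking the last
row and column of the monomial matrices. -/
noncomputable def theta (n : ℕ) (a : MonoidAlgebra ℂ (PartialBij (Fin (n + 1)))) :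
    MonoidAlgebra ℂ (PartialBij (Fin n)) :=
  MonoidAlgebra.ofCoeff (Finsupp.mapDomain corner a.coeff)

/-- The image of `Γ_m(n)` (partial bijections fixing each of the first `m` points)
inside the semigroup algebra `C[Γ(n)]`. -/
def Gset (m n : ℕ) : Set (MonoidAlgebra ℂ (PartialBij (Fin n))) :=
  {x | ∃ γ : PartialBij (Fin n), (∀ i : Fin n, i.val < m → γ.1 i = some i) ∧
    x = MonoidAlgebra.single γ 1}

end PartialBij

/-- Concatenation of compositions (the partition `M ∪ L`). -/
def Composition.app {a b : ℕ} (c₁ : Composition a) (c₂ : Composition b) :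
    Composition (a + b) :=
  ⟨c₁.blocks ++ c₂.blocks,
   fun {i} hi => (List.mem_append.mp hi).elim (fun h => c₁.blocks_pos h)
     (fun h => c₂.blocks_pos h),
   by rw [List.sum_append, c₁.blocks_sum, c₂.blocks_sum]⟩

/-- `c_n^{M}` for a partition (composition) `M = (M_1,…,M_r)`:
the sum over all sequences of `|M|` pairwise distinct indices of the
product of the disjoint cycles of lengths `M_1,…,M_r`. -/
noncomputable def cElt (n : ℕ) {N : ℕ} (c : Composition N) :
    MonoidAlgebra ℂ (Equiv.Perm (Fin n)) :=
  ∑ w : Fin N ↪ Fin n,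
    MonoidAlgebra.single ((((List.ofFn ⇑w).splitWrtComposition c).map List.formPerm).prod) 1

/-- `c_n^{M}` for a partition `M` of `n`. -/
noncomputable def cPart (n : ℕ) (p : Nat.Partition n) :
    MonoidAlgebra ℂ (Equiv.Perm (Fin n)) :=
  cElt n ⟨p.parts.toList,
    fun {i} hi => p.parts_pos (Multiset.mem_toList.mp hi),
    by rw [Multiset.sum_toList]⟩

/-- `Δ_n^{M}` in `C[Γ(n)]`. -/
noncomputable def Delta (n : ℕ) {N : ℕ} (c : Composition N) :
    MonoidAlgebra ℂ (PartialBij (Fin n)) :=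
  ∑ w : Fin N ↪ Fin n,
    MonoidAlgebra.single
      (PartialBij.ofPerm ((((List.ofFn ⇑w).splitWrtComposition c).map List.formPerm).prod)) 1
    * (List.ofFn fun a : Fin N =>
        (1 - MonoidAlgebra.single (PartialBij.eps (w a)) (1 : ℂ))).prod

section DeltaAux

open PartialBij MonoidAlgebra

variable {n : ℕ}

/-! ### Monoid-level lemmas -/

lemma eps_idem (k : Fin n) : eps k * eps k = eps k := by
  apply Subtype.ext; funext x
  show (((eps k).1 x).bind (eps k).1) = (eps k).1 x
  simp only [eps]
  split_ifs with h <;> simp [h]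

lemma eps_comm (i j : Fin n) : eps i * eps j = eps j * eps i := by
  apply Subtype.ext; funext x
  show (((eps j).1 x).bind (eps i).1) = (((eps i).1 x).bind (eps j).1)
  by_cases h1 : x = i <;> by_cases h2 : x = j <;> simp_all [eps]

lemma ofPerm_mul (σ τ : Equiv.Perm (Fin n)) :
    ofPerm (σ * τ) = ofPerm σ * ofPerm τ := by
  apply Subtype.ext; funext x
  rfl

lemma ofPerm_mul_eps (σ : Equiv.Perm (Fin n)) (j : Fin n) :
    ofPerm σ * eps j = eps (σ j) * ofPerm σ := by
  apply Subtype.ext; funext x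
  show ((eps j).1 x).bind (ofPerm σ).1 = (some (σ x)).bind (eps (σ j)).1
  by_cases h1 : x = j
  · subst h1; simp [eps, ofPerm]
  · have h2 : σ x ≠ σ j := fun hh => h1 (σ.injective hh)
    simp [eps, ofPerm, h1, h2]

lemma eps_mul_ofPerm (σ : Equiv.Perm (Fin n)) (k : Fin n) :
    eps k * ofPerm σ = ofPerm σ * eps (σ⁻¹ k) := by
  have := ofPerm_mul_eps σ (σ⁻¹ k)
  rw [show σ (σ⁻¹ k) = k from σ.apply_symm_apply k] at this
  exact this.symm

/-! ### Algebra-level abbreviations -/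

noncomputable def sP (γ : PartialBij (Fin n)) : MonoidAlgebra ℂ (PartialBij (Fin n)) :=
  MonoidAlgebra.single γ 1

lemma sP_mul (a b : PartialBij (Fin n)) : sP a * sP b = sP (a * b) := by
  simp [sP, MonoidAlgebra.single_mul_single]

noncomputable def Ee (k : Fin n) : MonoidAlgebra ℂ (PartialBij (Fin n)) :=
  1 - sP (eps k)

lemma sEps_mul_E_self (k : Fin n) : sP (eps k) * Ee k = 0 := by
  rw [Ee, mul_sub, mul_one, sP_mul, eps_idem, sub_self]

lemma sEps_comm_sEps (i j : Fin n) : Commute (sP (eps i)) (sP (eps j)) := by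
  show _ = _
  rw [sP_mul, sP_mul, eps_comm]

lemma sEps_comm_E (i j : Fin n) : Commute (sP (eps i)) (Ee j) :=
  (Commute.one_right _).sub_right (sEps_comm_sEps i j)

lemma E_comm_E (i j : Fin n) : Commute (Ee i) (Ee j) :=
  (Commute.one_left _).sub_left (sEps_comm_E i j)

lemma sPerm_mul_E (σ : Equiv.Perm (Fin n)) (j : Fin n) :
    sP (ofPerm σ) * Ee j = Ee (σ j) * sP (ofPerm σ) := by
  rw [Ee, Ee, mul_sub, sub_mul, mul_one, one_mul, sP_mul, sP_mul, ofPerm_mul_eps]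

/-! ### Products of `Ee` factors -/

noncomputable def Lp (l : List (Fin n)) : MonoidAlgebra ℂ (PartialBij (Fin n)) :=
  (l.map Ee).prod

@[simp] lemma Lp_nil : Lp ([] : List (Fin n)) = 1 := rfl

@[simp] lemma Lp_cons (i : Fin n) (t : List (Fin n)) : Lp (i :: t) = Ee i * Lp t := rfl

lemma sEps_comm_Lp (k : Fin n) (l : List (Fin n)) :
    Commute (sP (eps k)) (Lp l) := by
  induction l with
  | nil => exact Commute.one_right _
  | cons i t ih => exact (sEps_comm_E k i).mul_right ih

lemma sEps_mul_Lp_eq_zero {j : Fin n} {l : List (Fin n)} (h : j ∈ l) :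
    sP (eps j) * Lp l = 0 := by
  induction l with
  | nil => exact absurd h List.not_mem_nil
  | cons i t ih =>
    rcases List.mem_cons.mp h with h | h
    · subst h
      rw [Lp_cons, ← mul_assoc, sEps_mul_E_self, zero_mul]
    · rw [Lp_cons, ← mul_assoc, (sEps_comm_E j i).eq, mul_assoc, ih h, mul_zero]

lemma sPerm_mul_Lp (σ : Equiv.Perm (Fin n)) (l : List (Fin n)) :
    sP (ofPerm σ) * Lp l = Lp (l.map σ) * sP (ofPerm σ) := by
  induction l with
  | nil => simp
  | cons i t ih =>
    rw [Lp_cons, ← mul_assoc, sPerm_mul_E, mul_assoc, ih, List.map_cons, Lp_cons, mul_assoc]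

/-! ### Permutation facts -/

lemma prod_perm_fixed {α : Type*} (L : List (Equiv.Perm α)) (k : α)
    (h : ∀ p ∈ L, p k = k) : L.prod k = k := by
  induction L with
  | nil => rfl
  | cons p t ih =>
    rw [List.prod_cons, Equiv.Perm.mul_apply, ih (fun q hq => h q (List.mem_cons_of_mem _ hq)),
      h p List.mem_cons_self]

lemma formPerm_map {α : Type*} [DecidableEq α] (σ : Equiv.Perm α) :
    ∀ l : List α, (l.map σ).formPerm = σ * l.formPerm * σ⁻¹
  | [] => by simp
  | [x] => by simp
  | x :: y :: t => by
    rw [List.map_cons, List.map_cons, List.formPerm_cons_cons,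
      show (σ y :: List.map σ t) = (y :: t).map σ from rfl,
      formPerm_map σ (y :: t), List.formPerm_cons_cons, Equiv.swap_apply_apply]
    group

lemma prod_conj {α : Type*} (σ : Equiv.Perm α) (L : List (Equiv.Perm α)) :
    (L.map fun p => σ * p * σ⁻¹).prod = σ * L.prod * σ⁻¹ := by
  induction L with
  | nil => simp
  | cons p t ih => simp only [List.map_cons, List.prod_cons, ih]; group

/-! ### splitWrtComposition facts -/

lemma splitAux_map {α β : Type*} (f : α → β) :
    ∀ (ns : List ℕ) (l : List α),
      (l.map f).splitWrtCompositionAux ns = (l.splitWrtCompositionAux ns).map (List.map f)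
  | [], l => by simp [List.splitWrtCompositionAux]
  | m :: ns, l => by
    rw [List.splitWrtCompositionAux_cons, List.splitWrtCompositionAux_cons, List.map_cons,
      ← List.map_take, ← List.map_drop, splitAux_map f ns]

lemma split_map {α β : Type*} {N : ℕ} (f : α → β) (l : List α) (c : Composition N) :
    (l.map f).splitWrtComposition c = (l.splitWrtComposition c).map (List.map f) :=
  splitAux_map f c.blocks l

lemma mem_splitAux {α : Type*} :
    ∀ (ns : List ℕ) (l : List α) (l' : List α), l' ∈ l.splitWrtCompositionAux ns →
      ∀ x ∈ l', x ∈ l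
  | [], l, l', h => by simp [List.splitWrtCompositionAux] at h
  | m :: ns, l, l', h => by
    rw [List.splitWrtCompositionAux_cons, List.mem_cons] at h
    rcases h with h | h
    · subst h; exact fun x hx => List.take_subset m l hx
    · exact fun x hx => List.drop_subset m l (mem_splitAux ns _ l' h x hx)

lemma mem_split {α : Type*} {N : ℕ} {l l' : List α} {c : Composition N}
    (h : l' ∈ l.splitWrtComposition c) {x : α} (hx : x ∈ l') : x ∈ l :=
  mem_splitAux c.blocks l l' h x hx

/-! ### The permutation attached to an embedding -/

noncomputable def pw {N : ℕ} (c : Composition N) (w : Fin N ↪ Fin n) : Equiv.Perm (Fin n) :=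
  (((List.ofFn ⇑w).splitWrtComposition c).map List.formPerm).prod

lemma pw_fixed {N : ℕ} {c : Composition N} {w : Fin N ↪ Fin n} {k : Fin n}
    (h : k ∉ List.ofFn ⇑w) : pw c w k = k := by
  apply prod_perm_fixed
  intro p hp
  rcases List.mem_map.mp hp with ⟨l', hl', rfl⟩
  exact List.formPerm_apply_of_notMem (fun hk => h (mem_split hl' hk))

lemma ofFn_trans {N : ℕ} (σ : Equiv.Perm (Fin n)) (w : Fin N ↪ Fin n) :
    List.ofFn ⇑(w.trans σ.toEmbedding) = (List.ofFn ⇑w).map σ := by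
  rw [List.map_ofFn]
  rfl

lemma pw_conj {N : ℕ} (c : Composition N) (σ : Equiv.Perm (Fin n)) (w : Fin N ↪ Fin n) :
    σ * pw c w = pw c (w.trans σ.toEmbedding) * σ := by
  have : pw c (w.trans σ.toEmbedding) = σ * pw c w * σ⁻¹ := by
    rw [pw, ofFn_trans, split_map, List.map_map]
    have : (List.formPerm ∘ List.map ⇑σ : List (Fin n) → Equiv.Perm (Fin n))
        = (fun p => σ * p * σ⁻¹) ∘ List.formPerm := funext fun l => formPerm_map σ l
    rw [this, ← List.map_map, prod_conj]
    rfl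
  rw [this]
  group

/-! ### The terms of Delta -/

noncomputable def Tm {N : ℕ} (c : Composition N) (w : Fin N ↪ Fin n) :
    MonoidAlgebra ℂ (PartialBij (Fin n)) :=
  sP (ofPerm (pw c w)) * Lp (List.ofFn ⇑w)

lemma Delta_eq {N : ℕ} (c : Composition N) : Delta n c = ∑ w : Fin N ↪ Fin n, Tm c w := by
  refine Finset.sum_congr rfl fun w _ => ?_
  rw [Tm, sP, Lp, pw, List.map_ofFn]
  rfl

lemma sEps_mul_Tm {N : ℕ} (c : Composition N) (w : Fin N ↪ Fin n) (k : Fin n) :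
    sP (eps k) * Tm c w = Tm c w * sP (eps k) := by
  rw [Tm, ← mul_assoc, sP_mul, eps_mul_ofPerm, ← sP_mul, mul_assoc, mul_assoc,
    ← (sEps_comm_Lp k (List.ofFn ⇑w)).eq]
  by_cases h : k ∈ List.ofFn ⇑w
  · have h' : (pw c w)⁻¹ k ∈ List.ofFn ⇑w := by
      by_contra h'
      have := pw_fixed (c := c) (w := w) h'
      rw [show (pw c w) ((pw c w)⁻¹ k) = k from (pw c w).apply_symm_apply k] at this
      rw [← this] at h'
      exact h' h
    rw [sEps_mul_Lp_eq_zero h', sEps_mul_Lp_eq_zero h]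
  · have : (pw c w)⁻¹ k = k := by
      conv_lhs => rw [← pw_fixed (c := c) (w := w) h]
      exact Equiv.symm_apply_apply _ _
    rw [this]

lemma sPerm_mul_Tm {N : ℕ} (c : Composition N) (w : Fin N ↪ Fin n) (σ : Equiv.Perm (Fin n)) :
    sP (ofPerm σ) * Tm c w = Tm c (w.trans σ.toEmbedding) * sP (ofPerm σ) := by
  rw [Tm, ← mul_assoc, sP_mul, ← ofPerm_mul, pw_conj, ofPerm_mul, ← sP_mul, mul_assoc,
    sPerm_mul_Lp, ← ofFn_trans, Tm, mul_assoc]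

/-! ### Delta commutes with the generators -/

lemma sEps_comm_Delta {N : ℕ} (c : Composition N) (k : Fin n) :
    sP (eps k) * Delta n c = Delta n c * sP (eps k) := by
  rw [Delta_eq, Finset.mul_sum, Finset.sum_mul]
  exact Finset.sum_congr rfl fun w _ => sEps_mul_Tm c w k

lemma sPerm_comm_Delta {N : ℕ} (c : Composition N) (σ : Equiv.Perm (Fin n)) :
    sP (ofPerm σ) * Delta n c = Delta n c * sP (ofPerm σ) := by
  rw [Delta_eq, Finset.mul_sum, Finset.sum_mul]
  have hbij : Function.Bijective (fun w : Fin N ↪ Fin n => w.trans σ.toEmbedding) :=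
    Function.bijective_iff_has_inverse.mpr
      ⟨fun w => w.trans σ⁻¹.toEmbedding,
       fun w => by ext x; simp,
       fun w => by ext x; simp⟩
  calc ∑ w : Fin N ↪ Fin n, sP (ofPerm σ) * Tm c w
      = ∑ w : Fin N ↪ Fin n, Tm c (w.trans σ.toEmbedding) * sP (ofPerm σ) :=
        Finset.sum_congr rfl fun w _ => sPerm_mul_Tm c w σ
    _ = ∑ w : Fin N ↪ Fin n, Tm c w * sP (ofPerm σ) :=
        Fintype.sum_bijective _ hbij _ _ fun w => rfl

/-! ### Generation of the monoid -/

lemma total_eq_ofPerm (γ : PartialBij (Fin n)) (h : ∀ i, γ.1 i ≠ none) :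
    ∃ σ : Equiv.Perm (Fin n), γ = ofPerm σ := by
  have hs : ∀ i, (γ.1 i).isSome := fun i => Option.ne_none_iff_isSome.mp (h i)
  set f : Fin n → Fin n := fun x => (γ.1 x).get (hs x) with hf
  have hsome : ∀ x, γ.1 x = some (f x) := fun x => (Option.some_get (hs x)).symm
  have hinj : Function.Injective f := fun x y hxy =>
    γ.2 x y (f x) (hsome x) (by rw [hxy]; exact hsome y)
  refine ⟨Equiv.ofBijective f ((Finite.injective_iff_bijective).mp hinj), ?_⟩
  apply Subtype.ext; funext x
  rw [hsome x]
  rfl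

lemma exists_not_in_ran (γ : PartialBij (Fin n)) {i : Fin n} (hi : γ.1 i = none) :
    ∃ v : Fin n, ∀ x, γ.1 x ≠ some v := by
  by_contra hc
  push_neg at hc
  choose f hf using hc
  have hinj : Function.Injective f := by
    intro v v' hvv'
    have h1 := hf v
    rw [hvv', hf v'] at h1
    exact (Option.some_inj.mp h1).symm
  obtain ⟨v, hv⟩ := (Finite.injective_iff_surjective.mp hinj) i
  have hcontra := hf v
  rw [hv, hi] at hcontra
  exact absurd hcontra (by simp)

noncomputable def cork (γ : PartialBij (Fin n)) : ℕ :=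
  (Finset.univ.filter fun i : Fin n => γ.1 i = none).card

lemma sP_comm_Delta {N : ℕ} (c : Composition N) :
    ∀ (k : ℕ) (γ : PartialBij (Fin n)), cork γ = k →
      sP γ * Delta n c = Delta n c * sP γ := by
  intro k
  induction k with
  | zero =>
    intro γ hγ
    have h : ∀ i, γ.1 i ≠ none := by
      intro i hi
      have : i ∈ Finset.univ.filter fun i : Fin n => γ.1 i = none := by
        simp [hi]
      rw [Finset.card_eq_zero.mp hγ] at this
      exact absurd this (Finset.notMem_empty i)
    obtain ⟨σ, rfl⟩ := total_eq_ofPerm γ h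
    exact sPerm_comm_Delta c σ
  | succ k ih =>
    intro γ hγ
    by_cases htot : ∀ i, γ.1 i ≠ none
    · obtain ⟨σ, rfl⟩ := total_eq_ofPerm γ htot
      exact sPerm_comm_Delta c σ
    · push_neg at htot
      obtain ⟨i, hi⟩ := htot
      obtain ⟨v, hv⟩ := exists_not_in_ran γ hi
      set γ' : PartialBij (Fin n) :=
        ⟨fun x => if x = i then some v else γ.1 x, by
          intro x y z hx hy
          dsimp only at hx hy
          split_ifs at hx hy with h1 h2 h2
          · rw [h1, h2]
          · exact absurd (hy.trans (congrArg some (Option.some_inj.mp hx)).symm) (hv y)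
          · exact absurd (hx.trans (congrArg some (Option.some_inj.mp hy)).symm) (hv x)
          · exact γ.2 x y z hx hy⟩ with hγ'
      have hdecomp : γ = γ' * eps i := by
        apply Subtype.ext; funext x
        show γ.1 x = ((eps i).1 x).bind γ'.1
        simp only [eps, hγ']
        split_ifs with h1
        · rw [h1, hi]; rfl
        · simp [h1]
      have hcork : cork γ' = k := by
        have hset : (Finset.univ.filter fun x : Fin n => γ'.1 x = none)
            = (Finset.univ.filter fun x : Fin n => γ.1 x = none).erase i := by
          ext x
          simp only [Finset.mem_filter, Finset.mem_erase, Finset.mem_univ, true_and, hγ']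
          constructor
          · intro hx
            by_cases hxi : x = i
            · rw [hxi] at hx; simp at hx
            · rw [if_neg hxi] at hx; exact ⟨hxi, hx⟩
          · intro ⟨hxi, hx⟩
            rw [if_neg hxi]; exact hx
        have himem : i ∈ Finset.univ.filter fun x : Fin n => γ.1 x = none := by
          simp [hi]
        rw [cork, hset, Finset.card_erase_of_mem himem, ← cork, hγ]
        rfl
      have h1 := ih γ' hcork
      have h2 := sEps_comm_Delta c i
      rw [hdecomp, ← sP_mul, mul_assoc, h2, ← mul_assoc, h1, mul_assoc]

end DeltaAux

/-- `Δ_n^{M}` lies in the center of `C[Γ(n)]`. -/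
theorem Delta_mem_center (n : ℕ) {N : ℕ} (M : Composition N) (h : N ≤ n) :
    Delta n M ∈ Subalgebra.center ℂ (MonoidAlgebra ℂ (PartialBij (Fin n))) := by
  rw [Subalgebra.mem_center_iff]
  intro b
  induction b using MonoidAlgebra.induction_on with
  | of g => simpa [sP] using sP_comm_Delta M (cork g) g rfl
  | add f g hf hg => rw [add_mul, mul_add, hf, hg]
  | smul r f hfp => rw [smul_mul_assoc, mul_smul_comm, hfp]
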